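/- A lax module structure over a rigid monoidal category is strong: let C be a monoidal category in which every object has a left dual. Let F : C ⥤ C be a functor equipped with a natural transformation β with components β_{x,m} : x ⊗ F(m) ⟶ F(x ⊗ m) satisfying associativity (β_{x⊗y, m} ∘ α_{x,y,F m} = F(α_{x,y,m}) ∘ β_{x, y⊗m} ∘ (𝟙_x ⊗ β_{y,m}), appropriately bracketed) and unitality (β_{𝟙, m} agrees with the left unitors). Then every β_{x,m} is an isomorphism, with inverse constructed from the duality data: explicitly using the coevaluation 𝟙 ⟶ x ⊗ xᴸ, the lax structure β_{xᴸ, x⊗m}, and the evaluation xᴸ ⊗ x ⟶ 𝟙 together with F applied to the unit/triangle morphisms. -/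

import Mathlib

open CategoryTheory MonoidalCategory

universe v u

/-- A lax module structure over a rigid monoidal category is strong: if every object `x` of a
monoidal category `C` has a left dual (given by `dual x` with evaluation
`ev x : dual x ⊗ x ⟶ 𝟙_C` and coevaluation `coev x : 𝟙_C ⟶ x ⊗ dual x` satisfying the
zigzag identities), and `(F, β)` is a lax module endofunctor of `C` (with `β` natural,
associative and unital), then every structure map `β x m : x ⊗ F m ⟶ F (x ⊗ m)` is an
isomorphism. -/
theorem stmt_16 {C : Type u} [Category.{v} C] [MonoidalCategory C]
    (dual : C → C)
    (ev : ∀ x : C, dual x ⊗ x ⟶ 𝟙_ C)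
    (coev : ∀ x : C, 𝟙_ C ⟶ x ⊗ dual x)
    (hzig₁ : ∀ x : C,
      (λ_ x).inv ≫ (coev x ▷ x) ≫ (α_ x (dual x) x).hom ≫ (x ◁ ev x) ≫ (ρ_ x).hom = 𝟙 x)
    (hzig₂ : ∀ x : C,
      (ρ_ (dual x)).inv ≫ (dual x ◁ coev x) ≫ (α_ (dual x) x (dual x)).inv ≫
        (ev x ▷ dual x) ≫ (λ_ (dual x)).hom = 𝟙 (dual x))
    (F : C ⥤ C)
    (β : ∀ x m : C, x ⊗ F.obj m ⟶ F.obj (x ⊗ m))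
    (hnat : ∀ {x x' m m' : C} (f : x ⟶ x') (g : m ⟶ m'),
      (f ⊗ₘ F.map g) ≫ β x' m' = β x m ≫ F.map (f ⊗ₘ g))
    (hassoc : ∀ x y m : C,
      β (x ⊗ y) m ≫ F.map (α_ x y m).hom =
        (α_ x y (F.obj m)).hom ≫ (x ◁ β y m) ≫ β x (y ⊗ m))
    (hunit : ∀ m : C, β (𝟙_ C) m = (λ_ (F.obj m)).hom ≫ F.map (λ_ m).inv) :
    ∀ x m : C, IsIso (β x m) := by
  have hnat₁ : ∀ {x x' : C} (f : x ⟶ x') (m : C),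
      (f ▷ F.obj m) ≫ β x' m = β x m ≫ F.map (f ▷ m) := by
    intro x x' f m
    simpa [MonoidalCategory.tensorHom_def] using hnat f (𝟙 m)
  have hnat₂ : ∀ (x : C) {m m' : C} (g : m ⟶ m'),
      (x ◁ F.map g) ≫ β x m' = β x m ≫ F.map (x ◁ g) := by
    intro x m m' g
    simpa [MonoidalCategory.tensorHom_def] using hnat (𝟙 x) g
  have key : ∀ (x y : C), (λ_ (x ⊗ y)).inv ≫ coev x ▷ (x ⊗ y) ≫ (α_ x (dual x) (x ⊗ y)).hom ≫
      x ◁ ((α_ (dual x) x y).inv ≫ ev x ▷ y ≫ (λ_ y).hom) = 𝟙 (x ⊗ y) := by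
    intro x y
    have h := congrArg (· ▷ y) (hzig₁ x)
    simp only [comp_whiskerRight, id_whiskerRight] at h
    rw [← h]
    coherence
  intro x m
  refine ⟨(λ_ (F.obj (x ⊗ m))).inv ≫ coev x ▷ F.obj (x ⊗ m) ≫
      (α_ x (dual x) (F.obj (x ⊗ m))).hom ≫
      x ◁ (β (dual x) (x ⊗ m) ≫
        F.map ((α_ (dual x) x m).inv ≫ ev x ▷ m ≫ (λ_ m).hom)), ?_, ?_⟩
  · -- β ≫ g = 𝟙
    have inner : dual x ◁ β x m ≫ β (dual x) (x ⊗ m) ≫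
        F.map ((α_ (dual x) x m).inv ≫ ev x ▷ m ≫ (λ_ m).hom) =
        (α_ (dual x) x (F.obj m)).inv ≫ ev x ▷ F.obj m ≫ (λ_ (F.obj m)).hom := by
      have h1 : dual x ◁ β x m ≫ β (dual x) (x ⊗ m) =
          (α_ (dual x) x (F.obj m)).inv ≫ β (dual x ⊗ x) m ≫ F.map (α_ (dual x) x m).hom := by
        rw [hassoc]; simp
      rw [F.map_comp, F.map_comp, reassoc_of% h1]
      slice_lhs 3 4 => rw [← F.map_comp, Iso.hom_inv_id, F.map_id]
      rw [Category.id_comp, ← reassoc_of% hnat₁ (ev x) m, hunit]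
      simp [← F.map_comp]
    have step1 : β x m ≫ (λ_ (F.obj (x ⊗ m))).inv ≫ coev x ▷ F.obj (x ⊗ m) ≫
          (α_ x (dual x) (F.obj (x ⊗ m))).hom ≫
          x ◁ (β (dual x) (x ⊗ m) ≫
            F.map ((α_ (dual x) x m).inv ≫ ev x ▷ m ≫ (λ_ m).hom)) =
        (λ_ (x ⊗ F.obj m)).inv ≫ coev x ▷ (x ⊗ F.obj m) ≫
            (α_ x (dual x) (x ⊗ F.obj m)).hom ≫
            x ◁ (dual x ◁ β x m ≫ β (dual x) (x ⊗ m) ≫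
              F.map ((α_ (dual x) x m).inv ≫ ev x ▷ m ≫ (λ_ m).hom)) := by
      rw [leftUnitor_inv_naturality_assoc, whisker_exchange_assoc,
        associator_naturality_right_assoc]
      simp only [MonoidalCategory.whiskerLeft_comp, Category.assoc]
    rw [step1, inner]
    exact key x (F.obj m)
  · -- g ≫ β = 𝟙
    have h2 : x ◁ β (dual x) (x ⊗ m) ≫ β x (dual x ⊗ (x ⊗ m)) =
        (α_ x (dual x) (F.obj (x ⊗ m))).inv ≫ β (x ⊗ dual x) (x ⊗ m) ≫
          F.map (α_ x (dual x) (x ⊗ m)).hom := by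
      rw [hassoc]; simp
    simp only [MonoidalCategory.whiskerLeft_comp, Category.assoc]
    rw [hnat₂, reassoc_of% h2, Iso.hom_inv_id_assoc,
      reassoc_of% hnat₁ (coev x) (x ⊗ m), hunit]
    simp only [Category.assoc, Iso.inv_hom_id_assoc]
    simp only [← F.map_comp]
    rw [← F.map_id]
    congr 1
    simpa using key x m
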